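/- Let n ≡ 0 (mod 4). Then the polynomials Φ_n^1(x) and Φ_n^3(x) are monic of degree φ(n)/2 and have all coefficients in ℤ[i], and Φ_n(x) = Φ_n^1(x)·Φ_n^3(x) where Φ_n is the n-th cyclotomic polynomial. -/

import Mathlib

open Finset Polynomial

/-- `G_n^r(1) = {a : 1 ≤ a ≤ n-1, gcd(a,n)=1, a ≡ r (mod 4)}`. -/
def Grone (n r : ℕ) : Finset ℕ :=
  (Finset.range n).filter (fun a => 1 ≤ a ∧ Nat.gcd a n = 1 ∧ a % 4 = r)

/-- `Φ_n^r(x) = ∏_{a ∈ G_n^r(1)} (x − e^{2πia/n})`. -/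
noncomputable def Phir (n r : ℕ) : Polynomial ℂ :=
  ∏ a ∈ Grone n r, (X - C (Complex.exp (2 * Real.pi * Complex.I * a / n)))

noncomputable def zetaC (n : ℕ) : ℂ := Complex.exp (2 * Real.pi * Complex.I / n)

lemma Phir_eq (n r : ℕ) : Phir n r = ∏ a ∈ Grone n r, (X - C (zetaC n ^ a)) := by
  unfold Phir zetaC
  refine Finset.prod_congr rfl fun a _ => ?_
  rw [← Complex.exp_nat_mul]
  congr 1
  ring

lemma cyclo_eq (n : ℕ) (hn : 0 < n) :
    cyclotomic n ℂ =
      ∏ a ∈ (range n).filter (fun a => Nat.gcd a n = 1), (X - C (zetaC n ^ a)) := by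
  have hζ : IsPrimitiveRoot (zetaC n) n := Complex.isPrimitiveRoot_exp n hn.ne'
  rw [cyclotomic_eq_prod_X_sub_primitiveRoots hζ]
  have himg : primitiveRoots n ℂ =
      ((range n).filter (fun a => Nat.gcd a n = 1)).image (zetaC n ^ ·) := by
    ext μ
    simp only [mem_primitiveRoots hn, Finset.mem_image, Finset.mem_filter, Finset.mem_range]
    constructor
    · intro hμ
      haveI : NeZero n := ⟨hn.ne'⟩
      obtain ⟨i, hi, hieq⟩ := hζ.eq_pow_of_pow_eq_one hμ.pow_eq_one
      exact ⟨i, ⟨hi, (hζ.pow_iff_coprime hn i).mp (hieq ▸ hμ)⟩, hieq⟩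
    · rintro ⟨a, ⟨han, hg⟩, rfl⟩
      exact (hζ.pow_iff_coprime hn a).mpr hg
  rw [himg, Finset.prod_image]
  intro a ha b hb hab
  exact hζ.pow_inj (mem_range.1 (mem_filter.1 ha).1) (mem_range.1 (mem_filter.1 hb).1) hab

lemma filter_eq_union (n : ℕ) (hn : 0 < n) (h4 : n % 4 = 0) :
    (range n).filter (fun a => Nat.gcd a n = 1) = Grone n 1 ∪ Grone n 3 := by
  ext a
  simp only [Grone, Finset.mem_union, Finset.mem_filter, Finset.mem_range]
  constructor
  · rintro ⟨hlt, hg⟩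
    have h1 : 1 ≤ a := by
      rcases Nat.eq_zero_or_pos a with rfl | h
      · rw [Nat.gcd_zero_left] at hg; omega
      · exact h
    have hodd : a % 2 = 1 := by
      rcases Nat.even_or_odd a with he | ho
      · exfalso
        have h2 : 2 ∣ Nat.gcd a n := Nat.dvd_gcd he.two_dvd (by omega)
        rw [hg] at h2
        omega
      · exact Nat.odd_iff.mp ho
    rcases (by omega : a % 4 = 1 ∨ a % 4 = 3) with h | h
    · exact Or.inl ⟨hlt, h1, hg, h⟩
    · exact Or.inr ⟨hlt, h1, hg, h⟩
  · rintro (⟨hlt, h1, hg, _⟩ | ⟨hlt, h1, hg, _⟩) <;> exact ⟨hlt, hg⟩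

lemma grone_disj (n : ℕ) : Disjoint (Grone n 1) (Grone n 3) := by
  rw [Finset.disjoint_left]
  intro a ha hb
  simp only [Grone, Finset.mem_filter] at ha hb
  omega

lemma grone_mem_map (n : ℕ) (h4 : n % 4 = 0) {a : ℕ} (ha : a ∈ Grone n 1) :
    n - a ∈ Grone n 3 := by
  simp only [Grone, Finset.mem_filter, Finset.mem_range] at ha ⊢
  obtain ⟨hlt, h1, hg, hm⟩ := ha
  have key : Nat.gcd (n - a) n = 1 := by
    have h1' : Nat.gcd (n - a) a = Nat.gcd n a := Nat.gcd_sub_self_left (by omega)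
    calc Nat.gcd (n - a) n = Nat.gcd (n - a) (a + (n - a)) := by congr 1; omega
      _ = Nat.gcd (n - a) a := Nat.gcd_add_self_right _ _
      _ = 1 := by rw [h1', Nat.gcd_comm]; exact hg
  refine ⟨by omega, by omega, key, by omega⟩

lemma grone_mem_map' (n : ℕ) (h4 : n % 4 = 0) {a : ℕ} (ha : a ∈ Grone n 3) :
    n - a ∈ Grone n 1 := by
  simp only [Grone, Finset.mem_filter, Finset.mem_range] at ha ⊢
  obtain ⟨hlt, h1, hg, hm⟩ := ha
  have key : Nat.gcd (n - a) n = 1 := by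
    have h1' : Nat.gcd (n - a) a = Nat.gcd n a := Nat.gcd_sub_self_left (by omega)
    calc Nat.gcd (n - a) n = Nat.gcd (n - a) (a + (n - a)) := by congr 1; omega
      _ = Nat.gcd (n - a) a := Nat.gcd_add_self_right _ _
      _ = 1 := by rw [h1', Nat.gcd_comm]; exact hg
  refine ⟨by omega, by omega, key, by omega⟩

lemma card_grone (n : ℕ) (h4 : n % 4 = 0) : (Grone n 1).card = (Grone n 3).card := by
  refine Finset.card_bij' (fun a _ => n - a) (fun a _ => n - a)
    (fun a ha => grone_mem_map n h4 ha) (fun a ha => grone_mem_map' n h4 ha) ?_ ?_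
  · intro a ha
    simp only [Grone, Finset.mem_filter, Finset.mem_range] at ha
    show n - (n - a) = a
    omega
  · intro a ha
    simp only [Grone, Finset.mem_filter, Finset.mem_range] at ha
    show n - (n - a) = a
    omega

lemma totient_eq (n : ℕ) (hn : 0 < n) (h4 : n % 4 = 0) :
    (Grone n 1).card + (Grone n 3).card = Nat.totient n := by
  rw [← Finset.card_union_of_disjoint (grone_disj n), ← filter_eq_union n hn h4,
    Nat.totient]
  congr 1
  apply Finset.filter_congr
  intro a _
  simp [Nat.Coprime, Nat.gcd_comm]

lemma monic_Phir (n r : ℕ) : (Phir n r).Monic := by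
  rw [Phir_eq]
  exact monic_prod_of_monic _ _ fun a _ => monic_X_sub_C _

lemma natDegree_Phir (n r : ℕ) : (Phir n r).natDegree = (Grone n r).card := by
  rw [Phir_eq]
  rw [natDegree_prod _ _ (fun a _ => X_sub_C_ne_zero _)]
  simp only [natDegree_X_sub_C]
  simp

lemma cyclo_factor (n : ℕ) (hn : 0 < n) (h4 : n % 4 = 0) :
    cyclotomic n ℂ = Phir n 1 * Phir n 3 := by
  rw [cyclo_eq n hn, filter_eq_union n hn h4,
    Finset.prod_union (grone_disj n), Phir_eq, Phir_eq]
/-- The subfield ℚ(i) of ℂ. -/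
noncomputable def Qi : Subfield ℂ where
  carrier := {z | ∃ a b : ℚ, z = (a : ℂ) + (b : ℂ) * Complex.I}
  zero_mem' := ⟨0, 0, by simp⟩
  one_mem' := ⟨1, 0, by simp⟩
  add_mem' := by
    rintro x y ⟨a, b, rfl⟩ ⟨c, d, rfl⟩
    exact ⟨a + c, b + d, by push_cast; ring⟩
  neg_mem' := by
    rintro x ⟨a, b, rfl⟩
    exact ⟨-a, -b, by push_cast; ring⟩
  mul_mem' := by
    rintro x y ⟨a, b, rfl⟩ ⟨c, d, rfl⟩
    refine ⟨a * c - b * d, a * d + b * c, ?_⟩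
    push_cast
    linear_combination ((b : ℂ) * d) * Complex.I_sq
  inv_mem' := by
    rintro x ⟨a, b, rfl⟩
    by_cases hx : (a : ℂ) + (b : ℂ) * Complex.I = 0
    · exact ⟨0, 0, by rw [hx]; simp⟩
    · have hab : a ^ 2 + b ^ 2 ≠ 0 := by
        intro h
        have ha : a = 0 := by nlinarith [sq_nonneg a, sq_nonneg b]
        have hb : b = 0 := by nlinarith [sq_nonneg a, sq_nonneg b]
        exact hx (by rw [ha, hb]; simp)
      refine ⟨a / (a ^ 2 + b ^ 2), -b / (a ^ 2 + b ^ 2), ?_⟩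
      have habC : ((a : ℂ) ^ 2 + (b : ℂ) ^ 2) ≠ 0 := by
        intro h; apply hab; exact_mod_cast h
      rw [inv_eq_of_mul_eq_one_right]
      push_cast
      field_simp
      linear_combination (-(b : ℂ) ^ 2) * Complex.I_sq
lemma zeta_pow_quarter (n : ℕ) (hn : 0 < n) (h4 : n % 4 = 0) :
    zetaC n ^ (n / 4) = Complex.I := by
  unfold zetaC
  rw [← Complex.exp_nat_mul]
  have hm : (n : ℂ) = 4 * ((n / 4 : ℕ) : ℂ) := by
    exact_mod_cast congrArg (Nat.cast (R := ℂ)) (by omega : n = 4 * (n / 4))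
  have hm0 : ((n / 4 : ℕ) : ℂ) ≠ 0 := by
    have h : 0 < n / 4 := by omega
    exact_mod_cast h.ne'
  have hre : ((n / 4 : ℕ) : ℂ) * (2 * (Real.pi : ℂ) * Complex.I / n) =
      ((Real.pi / 2 : ℝ) : ℂ) * Complex.I := by
    rw [hm]
    push_cast
    field_simp
    ring
  rw [hre, Complex.exp_mul_I]
  simp [Complex.cos_ofReal_re]

lemma I_pow_of_mod (a r : ℕ) (h : a % 4 = r) : Complex.I ^ a = Complex.I ^ r := by
  conv_lhs => rw [(by omega : a = 4 * (a / 4) + r)]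
  rw [pow_add, pow_mul, Complex.I_pow_four, one_pow, one_mul]

lemma zeta_pow_pow (n a : ℕ) (hn : 0 < n) (h4 : n % 4 = 0) :
    (zetaC n ^ a) ^ (n / 4) = Complex.I ^ a := by
  rw [← pow_mul, mul_comm, pow_mul, zeta_pow_quarter n hn h4]

lemma Phir_one_dvd (n : ℕ) (hn : 0 < n) (h4 : n % 4 = 0) :
    Phir n 1 ∣ (X ^ (n / 4) - C Complex.I) := by
  have hζ : IsPrimitiveRoot (zetaC n) n := Complex.isPrimitiveRoot_exp n hn.ne'
  rw [Phir_eq]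
  apply Finset.prod_dvd_of_coprime
  · intro a ha b hb hab
    apply isCoprime_X_sub_C_of_isUnit_sub
    apply IsUnit.mk0
    intro h
    apply hab
    have hsub : zetaC n ^ a = zetaC n ^ b := by
      have := sub_eq_zero.mp h
      exact this
    simp only [Grone, Finset.coe_filter, Set.mem_setOf_eq, Finset.mem_range] at ha hb
    exact hζ.pow_inj ha.1 hb.1 hsub
  · intro a ha
    rw [dvd_iff_isRoot]
    simp only [Grone, Finset.mem_filter, Finset.mem_range] at ha
    simp only [IsRoot, eval_sub, eval_pow, eval_X, eval_C]
    rw [zeta_pow_pow n a hn h4, I_pow_of_mod a 1 ha.2.2.2, pow_one, sub_self]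

lemma coprime_P3 (n : ℕ) (hn : 0 < n) (h4 : n % 4 = 0) :
    IsCoprime (X ^ (n / 4) - C Complex.I) (Phir n 3) := by
  rw [Phir_eq]
  apply IsCoprime.prod_right
  intro a ha
  rw [isCoprime_comm]
  rw [(Polynomial.prime_X_sub_C (zetaC n ^ a)).coprime_iff_not_dvd]
  rw [dvd_iff_isRoot]
  simp only [Grone, Finset.mem_filter, Finset.mem_range] at ha
  simp only [IsRoot, eval_sub, eval_pow, eval_X, eval_C]
  rw [zeta_pow_pow n a hn h4, I_pow_of_mod a 3 ha.2.2.2]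
  intro h
  have h3 : Complex.I ^ 3 = -Complex.I := by
    rw [pow_succ, Complex.I_sq, neg_one_mul]
  rw [h3, sub_eq_zero] at h
  have := Complex.I_ne_zero
  apply this
  have h2 : (2 : ℂ) * Complex.I = 0 := by linear_combination -h
  simpa using h2

lemma Phir_one_coeff_mem (n : ℕ) (hn : 0 < n) (h4 : n % 4 = 0) (k : ℕ) :
    (Phir n 1).coeff k ∈ Qi := by
  classical
  set m := n / 4 with hmdef
  set f : Qi →+* ℂ := Qi.subtype with hfdef
  have hI : Complex.I ∈ Qi := ⟨0, 1, by simp⟩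
  set A : Polynomial Qi := cyclotomic n Qi with hAdef
  set B : Polynomial Qi := X ^ m - C ⟨Complex.I, hI⟩ with hBdef
  have hmapA : A.map f = cyclotomic n ℂ := map_cyclotomic n f
  have hmapB : B.map f = X ^ m - C Complex.I := by
    rw [hBdef, Polynomial.map_sub, Polynomial.map_pow, map_X, map_C]
    rfl
  set d := EuclideanDomain.gcd A B with hddef
  have hd0 : d ≠ 0 := by
    intro h
    exact (cyclotomic_ne_zero n Qi) ((EuclideanDomain.gcd_eq_zero_iff.mp h).1)
  set d' := normalize d with hd'def
  have hdd' : Associated d d' := (normalize_associated d).symm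
  have hmond' : d'.Monic := monic_normalize hd0
  have hP1A : Phir n 1 ∣ A.map f := by
    rw [hmapA, cyclo_factor n hn h4]
    exact Dvd.intro _ rfl
  have hP1B : Phir n 1 ∣ B.map f := by
    rw [hmapB]
    exact Phir_one_dvd n hn h4
  have hP1d : Phir n 1 ∣ d.map f := by
    rw [hddef, EuclideanDomain.gcd_eq_gcd_ab A B, Polynomial.map_add,
      Polynomial.map_mul, Polynomial.map_mul]
    exact dvd_add (hP1A.mul_right _) (hP1B.mul_right _)
  have hdP1 : d.map f ∣ Phir n 1 := by
    have h1 : d.map f ∣ Phir n 1 * Phir n 3 := by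
      rw [← cyclo_factor n hn h4, ← hmapA]
      exact Polynomial.map_dvd f (EuclideanDomain.gcd_dvd_left A B)
    have h2 : d.map f ∣ X ^ m - C Complex.I := by
      rw [← hmapB]
      exact Polynomial.map_dvd f (EuclideanDomain.gcd_dvd_right A B)
    exact ((coprime_P3 n hn h4).of_isCoprime_of_dvd_left h2).dvd_of_dvd_mul_right h1
  have hassoc : Associated (d.map f) (d'.map f) := hdd'.map (Polynomial.mapRingHom f)
  have heq : Phir n 1 = d'.map f := by
    refine eq_of_monic_of_associated (monic_Phir n 1) (hmond'.map f) ?_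
    exact associated_of_dvd_dvd (hP1d.trans hassoc.dvd) (hassoc.symm.dvd.trans hdP1)
  rw [heq, Polynomial.coeff_map]
  exact (d'.coeff k).2

lemma coeff_prod_isIntegral (s : Finset ℕ) (r : ℕ → ℂ)
    (h : ∀ a ∈ s, IsIntegral ℤ (r a)) :
    ∀ k : ℕ, IsIntegral ℤ ((∏ a ∈ s, (X - C (r a))).coeff k) := by
  classical
  induction s using Finset.induction_on with
  | empty =>
    intro k
    simp only [Finset.prod_empty, Polynomial.coeff_one]
    split_ifs
    · exact isIntegral_one
    · exact isIntegral_zero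
  | insert a s ha ih =>
    intro k
    rw [Finset.prod_insert ha, sub_mul, Polynomial.coeff_sub, Polynomial.coeff_C_mul]
    have hr : IsIntegral ℤ (r a) := h a (Finset.mem_insert_self a s)
    have hrest : ∀ k, IsIntegral ℤ ((∏ x ∈ s, (X - C (r x))).coeff k) :=
      ih fun x hx => h x (Finset.mem_insert_of_mem hx)
    cases k with
    | zero =>
      rw [Polynomial.mul_coeff_zero, Polynomial.coeff_X_zero, zero_mul]
      exact isIntegral_zero.sub (hr.mul (hrest 0))
    | succ k =>
      rw [Polynomial.coeff_X_mul]
      exact (hrest k).sub (hr.mul (hrest (k + 1)))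

lemma zeta_pow_isIntegral (n a : ℕ) (hn : 0 < n) : IsIntegral ℤ (zetaC n ^ a) := by
  refine ⟨X ^ n - C 1, monic_X_pow_sub_C 1 hn.ne', ?_⟩
  have hζ : (zetaC n) ^ n = 1 := (Complex.isPrimitiveRoot_exp n hn.ne').pow_eq_one
  have he : eval₂ (algebraMap ℤ ℂ) (zetaC n ^ a) (X ^ n - C 1) =
      (zetaC n ^ a) ^ n - 1 := by
    simp
  rw [he, ← pow_mul, mul_comm a n, pow_mul, hζ, one_pow, sub_self]

lemma Phir_coeff_isIntegral (n r k : ℕ) (hn : 0 < n) :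
    IsIntegral ℤ ((Phir n r).coeff k) := by
  rw [Phir_eq]
  exact coeff_prod_isIntegral _ _ (fun a _ => zeta_pow_isIntegral n a hn) k

lemma I_isIntegral : IsIntegral ℤ Complex.I := by
  refine ⟨X ^ 2 - C (-1), monic_X_pow_sub_C _ two_ne_zero, ?_⟩
  simp [Complex.I_sq]

lemma mem_Qi_integral (α : ℂ) (hmem : α ∈ Qi) (hint : IsIntegral ℤ α) :
    ∃ a b : ℤ, α = (a : ℂ) + (b : ℂ) * Complex.I := by
  obtain ⟨a, b, rfl⟩ := hmem
  set α := (a : ℂ) + (b : ℂ) * Complex.I with hα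
  have hconj : IsIntegral ℤ ((a : ℂ) - (b : ℂ) * Complex.I) := by
    have h1 : IsIntegral ℤ (starRingEnd ℂ α) := hint.map ((starRingEnd ℂ).toIntAlgHom)
    have h2 : starRingEnd ℂ α = (a : ℂ) - (b : ℂ) * Complex.I := by
      rw [hα]
      simp [map_add, map_mul, Complex.conj_I]
      ring
    rwa [h2] at h1
  have hQint : ∀ q : ℚ, IsIntegral ℤ ((q : ℂ)) → ∃ x : ℤ, (x : ℚ) = q := by
    intro q hq
    have hinj : Function.Injective (algebraMap ℚ ℂ) := (algebraMap ℚ ℂ).injective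
    have : IsIntegral ℤ q := by
      rwa [← isIntegral_algHom_iff ((algebraMap ℚ ℂ).toIntAlgHom) hinj]
    exact IsIntegrallyClosed.isIntegral_iff.mp this
  obtain ⟨x, hx⟩ : ∃ x : ℤ, (x : ℚ) = 2 * a := by
    apply hQint
    have h := hint.add hconj
    have he : α + ((a : ℂ) - (b : ℂ) * Complex.I) = ((2 * a : ℚ) : ℂ) := by
      rw [hα]; push_cast; ring
    rwa [he] at h
  obtain ⟨y, hy⟩ : ∃ y : ℤ, (y : ℚ) = 2 * b := by
    apply hQint
    have h := (hint.sub hconj).mul I_isIntegral.neg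
    have he : (α - ((a : ℂ) - (b : ℂ) * Complex.I)) * (-Complex.I) = ((2 * b : ℚ) : ℂ) := by
      rw [hα]; push_cast
      linear_combination (-2 * (b:ℂ)) * Complex.I_sq
    rwa [he] at h
  obtain ⟨z, hz⟩ : ∃ z : ℤ, (z : ℚ) = a ^ 2 + b ^ 2 := by
    apply hQint
    have h := hint.mul hconj
    have he : α * ((a : ℂ) - (b : ℂ) * Complex.I) = (((a ^ 2 + b ^ 2 : ℚ)) : ℂ) := by
      rw [hα]; push_cast
      linear_combination (-(b:ℂ)^2) * Complex.I_sq
    rwa [he] at h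
  have hsq : x ^ 2 + y ^ 2 = 4 * z := by
    have hq : (x : ℚ) ^ 2 + (y : ℚ) ^ 2 = 4 * z := by
      rw [hx, hy, hz]; ring
    exact_mod_cast hq
  obtain ⟨k, hk | hk⟩ := Int.even_or_odd' x <;> obtain ⟨l, hl | hl⟩ := Int.even_or_odd' y
  · -- both even
    refine ⟨k, l, ?_⟩
    have ha' : (k : ℚ) = a := by
      have : ((2 * k : ℤ) : ℚ) = 2 * a := by rw [← hk]; exact_mod_cast hx
      push_cast at this; linarith
    have hb' : (l : ℚ) = b := by
      have : ((2 * l : ℤ) : ℚ) = 2 * b := by rw [← hl]; exact_mod_cast hy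
      push_cast at this; linarith
    rw [hα, ← ha', ← hb']
    push_cast
    ring
  · exfalso
    have e2 : (4 : ℤ) ∣ 1 := ⟨z - (k * k + l * l + l), by rw [hk, hl] at hsq; ring_nf at hsq ⊢; linarith⟩
    norm_num at e2
  · exfalso
    have e2 : (4 : ℤ) ∣ 1 := ⟨z - (k * k + k + l * l), by rw [hk, hl] at hsq; ring_nf at hsq ⊢; linarith⟩
    norm_num at e2
  · exfalso
    have e2 : (4 : ℤ) ∣ 2 := ⟨z - (k * k + k + l * l + l), by rw [hk, hl] at hsq; ring_nf at hsq ⊢; linarith⟩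
    omega

lemma zeta_conj (n a : ℕ) (hn : 0 < n) (ha : a ≤ n) :
    starRingEnd ℂ (zetaC n ^ a) = zetaC n ^ (n - a) := by
  have hexp : 2 * (Real.pi : ℂ) * Complex.I / n = ((2 * Real.pi / n : ℝ) : ℂ) * Complex.I := by
    push_cast; ring
  have habs : ‖zetaC n‖ = 1 := by
    unfold zetaC
    rw [hexp, Complex.norm_exp_ofReal_mul_I]
  have habs' : ‖zetaC n ^ a‖ = 1 := by rw [norm_pow, habs, one_pow]
  have hζn : zetaC n ^ n = 1 := (Complex.isPrimitiveRoot_exp n hn.ne').pow_eq_one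
  have hmul : zetaC n ^ (n - a) * zetaC n ^ a = 1 := by
    rw [← pow_add, Nat.sub_add_cancel ha, hζn]
  rw [← RCLike.inv_eq_conj habs']
  exact (eq_inv_of_mul_eq_one_left hmul).symm

lemma Phir_three_coeff_conj (n : ℕ) (hn : 0 < n) (h4 : n % 4 = 0) (k : ℕ) :
    (Phir n 3).coeff k = starRingEnd ℂ ((Phir n 1).coeff k) := by
  have hmap : (Phir n 1).map (starRingEnd ℂ) = Phir n 3 := by
    rw [Phir_eq, Phir_eq, Polynomial.map_prod]
    refine Finset.prod_bij' (fun a _ => n - a) (fun a _ => n - a)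
      (fun a ha => grone_mem_map n h4 ha) (fun a ha => grone_mem_map' n h4 ha)
      ?_ ?_ ?_
    · intro a ha
      simp only [Grone, Finset.mem_filter, Finset.mem_range] at ha
      show n - (n - a) = a
      omega
    · intro a ha
      simp only [Grone, Finset.mem_filter, Finset.mem_range] at ha
      show n - (n - a) = a
      omega
    · intro a ha
      simp only [Grone, Finset.mem_filter, Finset.mem_range] at ha
      rw [Polynomial.map_sub, map_X, map_C, zeta_conj n a hn (le_of_lt ha.1)]
  rw [← hmap, Polynomial.coeff_map]

theorem stmt10 (n : ℕ) (hn : 0 < n) (h4 : n % 4 = 0) :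
    (Phir n 1).Monic ∧ (Phir n 3).Monic ∧
    2 * (Phir n 1).natDegree = Nat.totient n ∧
    2 * (Phir n 3).natDegree = Nat.totient n ∧
    (∀ k : ℕ, ∃ a b : ℤ, (Phir n 1).coeff k = (a : ℂ) + (b : ℂ) * Complex.I) ∧
    (∀ k : ℕ, ∃ a b : ℤ, (Phir n 3).coeff k = (a : ℂ) + (b : ℂ) * Complex.I) ∧
    Polynomial.cyclotomic n ℂ = Phir n 1 * Phir n 3 := by
  have h1 := totient_eq n hn h4
  have h2 := card_grone n h4
  refine ⟨monic_Phir n 1, monic_Phir n 3, ?_, ?_, ?_, ?_, cyclo_factor n hn h4⟩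
  · rw [natDegree_Phir]; omega
  · rw [natDegree_Phir]; omega
  · intro k
    exact mem_Qi_integral _ (Phir_one_coeff_mem n hn h4 k) (Phir_coeff_isIntegral n 1 k hn)
  · intro k
    obtain ⟨a, b, hab⟩ :=
      mem_Qi_integral _ (Phir_one_coeff_mem n hn h4 k) (Phir_coeff_isIntegral n 1 k hn)
    refine ⟨a, -b, ?_⟩
    rw [Phir_three_coeff_conj n hn h4 k, hab]
    push_cast
    simp [map_add, map_mul, Complex.conj_I]
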